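/- Suppose Û solves the determined subsystem û^I_{x_{min I}} = F^I_{min I}(x; Û^I_{min I}) (one equation per I ∈ 𝓘) of a C² Darboux system near 0, and define Δ^I_i(x) := û^I_{x_i}(x) − F^I_i(x; Û^I_i(x)) for i ∈ I with i > min I. Then for each such (I,i), with ℓ := min I, the derivative ∂_{x_ℓ} Δ^I_i exists and equals Σ_{K ⊇ I∖ℓ} A^I_{ℓ,K}(x) Δ^K_i(x) − Σ_{K ⊇ I∖i} A^I_{i,K}(x) Δ^K_ℓ(x), where A^I_{j,K}(x) := F^I_{j,u^K}(x; Û^I_j(x)); in these sums, the terms with min K equal to i (first sum) or ℓ (second sum) vanish identically. -/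

import Mathlib

open Set Function

theorem hasDerivAt_update_line {n : ℕ} (x : Fin n → ℝ) (i : Fin n) (t : ℝ) :
    HasDerivAt (fun t : ℝ => Function.update x i t) (Pi.single i 1) t := by
  have h : (fun t : ℝ => Function.update x i t)
      = fun t : ℝ => Function.update x i 0 + t • (Pi.single i 1 : Fin n → ℝ) := by
    funext t
    funext j
    rcases eq_or_ne j i with rfl | hj
    · simp
    · simp [Function.update_of_ne hj, Pi.single_eq_of_ne hj]
  rw [h]
  simpa using ((hasDerivAt_id t).smul_const (Pi.single i (1:ℝ) : Fin n → ℝ)).const_add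
    (Function.update x i 0)

theorem hasDerivAt_update_comp {n : ℕ} {f : (Fin n → ℝ) → ℝ} {y : Fin n → ℝ}
    (hf : DifferentiableAt ℝ f y) (i : Fin n) :
    HasDerivAt (fun t => f (Function.update y i t))
      (fderiv ℝ f y (Pi.single i 1)) (y i) := by
  have hl : HasFDerivAt f (fderiv ℝ f y) (Function.update y i (y i)) := by
    rw [Function.update_eq_self]; exact hf.hasFDerivAt
  exact hl.comp_hasDerivAt (y i) (hasDerivAt_update_line y i (y i))

theorem clm_pair_sum {n : ℕ} {κ : Type} [Fintype κ] [DecidableEq κ]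
    (L : ((Fin n → ℝ) × (κ → ℝ)) →L[ℝ] ℝ) (Δ : κ → ℝ) :
    L ((0 : Fin n → ℝ), Δ) = ∑ m, L ((0 : Fin n → ℝ), Pi.single m 1) * Δ m := by
  have key : ∀ v : κ → ℝ, L ((0 : Fin n → ℝ), v)
      = (L.comp (ContinuousLinearMap.inr ℝ (Fin n → ℝ) (κ → ℝ))) v := by
    intro v; simp
  have hsm : ∀ (c : ℝ) (v : κ → ℝ), (((0 : Fin n → ℝ), c • v) : (Fin n → ℝ) × (κ → ℝ))
      = c • (((0 : Fin n → ℝ), v) : (Fin n → ℝ) × (κ → ℝ)) := by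
    intro c v; rw [Prod.smul_mk, smul_zero]
  rw [key]
  conv_lhs => rw [← Finset.univ_sum_single Δ]
  rw [map_sum]
  refine Finset.sum_congr rfl fun m _ => ?_
  rw [← key]
  have h1 : Pi.single m (Δ m) = Δ m • (Pi.single m 1 : κ → ℝ) := by
    funext j; by_cases h : j = m <;> simp [Pi.single_apply, h]
  rw [h1, hsm, map_smul, smul_eq_mul, mul_comm]


/-- The defect functions `Δ^I_i(x) = û^I_{x_i}(x) - F^I_i(x; Û^I_i(x))` measuring the
failure of a solution of the determined subsystem to solve the remaining equations. -/
noncomputable def darbouxDefect (n : ℕ) (κ : Type)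
    (F : κ → Fin n → (Fin n → ℝ) → (κ → ℝ) → ℝ)
    (uhat : κ → (Fin n → ℝ) → ℝ) (k : κ) (i : Fin n) (x : Fin n → ℝ) : ℝ :=
  deriv (fun t => uhat k (Function.update x i t)) (x i) -
    F k i x (fun m => uhat m x)

/-- Step (A) in the proof of Darboux's theorem on overdetermined systems: if `Û`
solves the determined subsystem consisting of the equations in the directions
`min I`, then for `i ∈ I` with `i > ℓ := min I` the defect `Δ^I_i` is differentiable
in `x_ℓ` with
`∂_{x_ℓ} Δ^I_i = Σ_K A^I_{ℓ,K} Δ^K_i − Σ_K A^I_{i,K} Δ^K_ℓ`,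
where `A^I_{j,K}(x) = F^I_{j,u^K}(x; Û(x))` (the sums may be taken over all
unknowns, the coefficients for `K ⊉ I∖ℓ`, resp. `K ⊉ I∖i`, vanishing by the
dependence restrictions); moreover the defects `Δ^K_{min K}` vanish identically,
so the terms with `min K = i` in the first sum and `min K = ℓ` in the second
sum vanish. -/
theorem darboux_defect_linear_system (n : ℕ) (κ : Type) [Fintype κ] [DecidableEq κ]
    (P : κ → Finset (Fin n)) (hP : ∀ k, (P k).Nonempty)
    (F : κ → Fin n → (Fin n → ℝ) → (κ → ℝ) → ℝ)
    (s : Set ((Fin n → ℝ) × (κ → ℝ))) (hs : IsOpen s)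
    (hFsm : ∀ k, ∀ i ∈ P k,
      ContDiffOn ℝ 2 (fun p : (Fin n → ℝ) × (κ → ℝ) => F k i p.1 p.2) s)
    (hdep : ∀ k, ∀ i ∈ P k, ∀ x U V,
      (∀ m, P k \ {i} ⊆ P m → U m = V m) → F k i x U = F k i x V)
    (hint : ∀ k, ∀ i ∈ P k, ∀ j ∈ P k, i ≠ j → ∀ p ∈ s,
      fderiv ℝ (fun q : (Fin n → ℝ) × (κ → ℝ) => F k i q.1 q.2) p
        ((Pi.single j 1 : Fin n → ℝ), fun m => F m j p.1 p.2)
      = fderiv ℝ (fun q : (Fin n → ℝ) × (κ → ℝ) => F k j q.1 q.2) p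
        ((Pi.single i 1 : Fin n → ℝ), fun m => F m i p.1 p.2))
    (σ : ℝ) (hσ : 0 < σ)
    (uhat : κ → (Fin n → ℝ) → ℝ)
    (huhat : ∀ k, ContDiffOn ℝ 2 (uhat k) (Metric.ball 0 σ))
    (hmem : ∀ x ∈ Metric.ball (0 : Fin n → ℝ) σ, (x, fun m => uhat m x) ∈ s)
    (hsolve : ∀ x ∈ Metric.ball (0 : Fin n → ℝ) σ, ∀ k,
      HasDerivAt (fun t => uhat k (Function.update x ((P k).min' (hP k)) t))
        (F k ((P k).min' (hP k)) x (fun m => uhat m x)) (x ((P k).min' (hP k)))) :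
    -- the defects in the `min` directions vanish identically ...
    (∀ x ∈ Metric.ball (0 : Fin n → ℝ) σ, ∀ m,
      darbouxDefect n κ F uhat m ((P m).min' (hP m)) x = 0) ∧
    -- ... and each remaining defect satisfies the linear homogeneous equation
    ∀ x ∈ Metric.ball (0 : Fin n → ℝ) σ, ∀ k, ∀ i ∈ P k,
      (P k).min' (hP k) < i →
      HasDerivAt
        (fun t => darbouxDefect n κ F uhat k i
          (Function.update x ((P k).min' (hP k)) t))
        ((∑ m : κ,
            (fderiv ℝ (fun q : (Fin n → ℝ) × (κ → ℝ) =>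
                F k ((P k).min' (hP k)) q.1 q.2) (x, fun m' => uhat m' x)
              ((0 : Fin n → ℝ), Pi.single m 1)) *
            darbouxDefect n κ F uhat m i x) -
          ∑ m : κ,
            (fderiv ℝ (fun q : (Fin n → ℝ) × (κ → ℝ) =>
                F k i q.1 q.2) (x, fun m' => uhat m' x)
              ((0 : Fin n → ℝ), Pi.single m 1)) *
            darbouxDefect n κ F uhat m ((P k).min' (hP k)) x)
        (x ((P k).min' (hP k))) := by
  classical
  have hBo : IsOpen (Metric.ball (0 : Fin n → ℝ) σ) := Metric.isOpen_ball
  have hdm : ∀ (m : κ), ∀ y ∈ Metric.ball (0 : Fin n → ℝ) σ, DifferentiableAt ℝ (uhat m) y := by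
    intro m y hy
    exact ((huhat m).contDiffAt (hBo.mem_nhds hy)).differentiableAt two_ne_zero
  have hdef : ∀ y ∈ Metric.ball (0 : Fin n → ℝ) σ, ∀ (m : κ) (j : Fin n),
      darbouxDefect n κ F uhat m j y
        = fderiv ℝ (uhat m) y (Pi.single j 1) - F m j y (fun m' => uhat m' y) := by
    intro y hy m j
    unfold darbouxDefect
    rw [(hasDerivAt_update_comp (hdm m y hy) j).deriv]
  have part1 : ∀ x ∈ Metric.ball (0 : Fin n → ℝ) σ, ∀ m,
      darbouxDefect n κ F uhat m ((P m).min' (hP m)) x = 0 := by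
    intro x hx m
    unfold darbouxDefect
    rw [(hsolve x hx m).deriv, sub_self]
  refine ⟨part1, ?_⟩
  intro x hx k i hi hlt
  set ℓ := (P k).min' (hP k) with hℓdef
  have hℓP : ℓ ∈ P k := (P k).min'_mem (hP k)
  have hne : ℓ ≠ i := ne_of_lt hlt
  set p : (Fin n → ℝ) × (κ → ℝ) := (x, fun m => uhat m x) with hp
  have hps : p ∈ s := hmem x hx
  -- second derivative of uhat k
  have hck : ContDiffAt ℝ 2 (uhat k) x := (huhat k).contDiffAt (hBo.mem_nhds hx)
  have hd2 : DifferentiableAt ℝ (fderiv ℝ (uhat k)) x :=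
    (hck.fderiv_right (m := 1) (by norm_num)).differentiableAt one_ne_zero
  set f'' := fderiv ℝ (fderiv ℝ (uhat k)) x with hf''def
  have hsymm : ∀ v w, f'' v w = f'' w v := hck.isSymmSndFDerivAt (by simp [minSmoothness_of_isRCLikeNormedField])
  have hC : ∀ j : Fin n, HasFDerivAt (fun y => fderiv ℝ (uhat k) y (Pi.single j 1))
      ((ContinuousLinearMap.apply ℝ ℝ (Pi.single j 1 : Fin n → ℝ)).comp f'') x := by
    intro j
    have h := (ContinuousLinearMap.apply ℝ ℝ
      (Pi.single j 1 : Fin n → ℝ)).hasFDerivAt.comp x hd2.hasFDerivAt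
    exact h
  -- chain rule
  set φ' : (Fin n → ℝ) →L[ℝ] (Fin n → ℝ) × (κ → ℝ) :=
    (ContinuousLinearMap.id ℝ (Fin n → ℝ)).prod
      (ContinuousLinearMap.pi fun m => fderiv ℝ (uhat m) x) with hφ'def
  have hφ : HasFDerivAt (fun y => (y, fun m => uhat m y)) φ' x := by
    exact (hasFDerivAt_id x).prodMk (hasFDerivAt_pi.2 fun m => (hdm m x hx).hasFDerivAt)
  have hφapp : ∀ v : Fin n → ℝ, φ' v = (v, fun m => fderiv ℝ (uhat m) x v) := by
    intro v; rfl
  have hchain : ∀ j ∈ P k, HasFDerivAt (fun y => F k j y (fun m => uhat m y))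
      ((fderiv ℝ (fun q : (Fin n → ℝ) × (κ → ℝ) => F k j q.1 q.2) p).comp φ') x := by
    intro j hj
    have hG : HasFDerivAt (fun q : (Fin n → ℝ) × (κ → ℝ) => F k j q.1 q.2)
        (fderiv ℝ (fun q : (Fin n → ℝ) × (κ → ℝ) => F k j q.1 q.2) p) p :=
      (((hFsm k j hj).contDiffAt (hs.mem_nhds hps)).differentiableAt two_ne_zero).hasFDerivAt
    have h := hG.comp x hφ
    exact h
  -- the solved equation identifies the gradient in direction ℓ with F k ℓ
  have hFeq : ∀ y ∈ Metric.ball (0 : Fin n → ℝ) σ,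
      F k ℓ y (fun m => uhat m y) = fderiv ℝ (uhat k) y (Pi.single ℓ 1) := by
    intro y hy
    exact (hsolve y hy k).unique (hasDerivAt_update_comp (hdm k y hy) ℓ)
  have hBkey : HasFDerivAt (fun y => F k ℓ y (fun m => uhat m y))
      ((ContinuousLinearMap.apply ℝ ℝ (Pi.single ℓ 1 : Fin n → ℝ)).comp f'') x := by
    refine (hC ℓ).congr_of_eventuallyEq ?_
    filter_upwards [hBo.mem_nhds hx] with y hy
    exact hFeq y hy
  have hkey : (fderiv ℝ (fun q : (Fin n → ℝ) × (κ → ℝ) => F k ℓ q.1 q.2) p).comp φ'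
      = (ContinuousLinearMap.apply ℝ ℝ (Pi.single ℓ 1 : Fin n → ℝ)).comp f'' :=
    (hchain ℓ hℓP).unique hBkey
  -- differentiate the defect
  have hD : HasFDerivAt
      (fun y => fderiv ℝ (uhat k) y (Pi.single i 1) - F k i y (fun m => uhat m y))
      (((ContinuousLinearMap.apply ℝ ℝ (Pi.single i 1 : Fin n → ℝ)).comp f'')
        - (fderiv ℝ (fun q : (Fin n → ℝ) × (κ → ℝ) => F k i q.1 q.2) p).comp φ') x :=
    (hC i).sub (hchain i hi)
  have hD' : HasFDerivAt
      (fun y => fderiv ℝ (uhat k) y (Pi.single i 1) - F k i y (fun m => uhat m y))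
      (((ContinuousLinearMap.apply ℝ ℝ (Pi.single i 1 : Fin n → ℝ)).comp f'')
        - (fderiv ℝ (fun q : (Fin n → ℝ) × (κ → ℝ) => F k i q.1 q.2) p).comp φ')
      (Function.update x ℓ (x ℓ)) := by
    rw [Function.update_eq_self]; exact hD
  have hline := hD'.comp_hasDerivAt (x ℓ) (hasDerivAt_update_line x ℓ (x ℓ))
  have hev : (fun t => darbouxDefect n κ F uhat k i (Function.update x ℓ t))
      =ᶠ[nhds (x ℓ)]
      ((fun y => fderiv ℝ (uhat k) y (Pi.single i 1) - F k i y (fun m => uhat m y))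
        ∘ fun t => Function.update x ℓ t) := by
    have hcont : ContinuousAt (fun t : ℝ => Function.update x ℓ t) (x ℓ) :=
      (hasDerivAt_update_line x ℓ (x ℓ)).continuousAt
    have hmem' : Function.update x ℓ (x ℓ) ∈ Metric.ball (0 : Fin n → ℝ) σ := by
      rw [Function.update_eq_self]; exact hx
    filter_upwards [hcont.preimage_mem_nhds (hBo.mem_nhds hmem')] with t ht
    exact hdef _ ht k i
  have hfinal : HasDerivAt (fun t => darbouxDefect n κ F uhat k i (Function.update x ℓ t)) _ (x ℓ) :=
    hline.congr_of_eventuallyEq hev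
  convert hfinal using 1
  -- the value
  simp only [ContinuousLinearMap.sub_apply, ContinuousLinearMap.comp_apply,
    ContinuousLinearMap.apply_apply]
  -- goal: target = f'' (single ℓ 1) (single i 1) - L_i (φ' (single ℓ 1))
  rw [hsymm]
  have hkey' : fderiv ℝ (fun q : (Fin n → ℝ) × (κ → ℝ) => F k ℓ q.1 q.2) p (φ' (Pi.single i 1))
      = f'' (Pi.single i 1) (Pi.single ℓ 1) := by
    have h := congrArg (fun M : (Fin n → ℝ) →L[ℝ] ℝ => M (Pi.single i 1)) hkey
    simpa using h
  rw [← hkey']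
  -- split the arguments
  have hDu : ∀ (j : Fin n) (m : κ), fderiv ℝ (uhat m) x (Pi.single j 1)
      = F m j x (fun m' => uhat m' x) + darbouxDefect n κ F uhat m j x := by
    intro j m; rw [hdef x hx m j]; ring
  have hsplit : ∀ (L : ((Fin n → ℝ) × (κ → ℝ)) →L[ℝ] ℝ) (j : Fin n),
      L (φ' (Pi.single j 1))
      = L ((Pi.single j 1 : Fin n → ℝ), fun m => F m j x (fun m' => uhat m' x))
        + L ((0 : Fin n → ℝ), fun m => darbouxDefect n κ F uhat m j x) := by
    intro L j
    rw [← map_add]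
    congr 1
    rw [hφapp]
    refine Prod.ext (by simp) ?_
    funext m
    simp only [Prod.snd_add, Pi.add_apply]
    exact hDu j m
  rw [hsplit _ i, hsplit _ ℓ]
  have hintx := hint k ℓ hℓP i hi hne p hps
  have hp1 : p.1 = x := rfl
  have hp2 : p.2 = fun m => uhat m x := rfl
  rw [hp1, hp2] at hintx
  rw [hintx]
  rw [clm_pair_sum, clm_pair_sum]
  ring
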